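/- Let G = (V, E) be a simple graph with Δ(G) ≤ 8, let π be a partial 8-edge-coloring of G, and let e = xy be an uncolored butterfly-like edge such that all edges at distance at most 1 from e are colored. Then there exists a partial 8-edge-coloring σ of G whose set of colored edges is π's colored set together with e. -/

import Mathlib

open SimpleGraph

open scoped Classical in
/-- `π` is a proper partial `D`-edge-coloring of `G`: it assigns `none` outside the edge set,
and distinct incident edges receive different colors. -/
def IsProperPEC {V : Type} (G : SimpleGraph V) (D : ℕ) (π : Sym2 V → Option (Fin D)) : Prop :=
  (∀ e, π e ≠ none → e ∈ G.edgeSet) ∧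
    ∀ e₁ e₂ : Sym2 V, e₁ ≠ e₂ → (∃ v, v ∈ e₁ ∧ v ∈ e₂) → π e₁ ≠ none → π e₁ ≠ π e₂

/-- Number of neighbors of `x` having degree `8`. -/
def deg8Nbrs {V : Type} [Fintype V] [DecidableEq V] (G : SimpleGraph V) [DecidableRel G.Adj]
    (x : V) : ℕ :=
  ((G.neighborFinset x).filter (fun w => G.degree w = 8)).card

/-- The edge `xy` is `x`-weak. -/
def IsXWeak {V : Type} [Fintype V] [DecidableEq V] (G : SimpleGraph V) [DecidableRel G.Adj]
    (x y : V) : Prop :=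
  deg8Nbrs G x ≤ 8 - G.degree y + (if G.degree y = 8 then 1 else 0)

/-- The edge `e` is weak: `e = xy` with `xy` `x`-weak or `y`-weak. -/
def IsWeakEdge {V : Type} [Fintype V] [DecidableEq V] (G : SimpleGraph V) [DecidableRel G.Adj]
    (e : Sym2 V) : Prop :=
  ∃ x y : V, e = s(x, y) ∧ G.Adj x y ∧ (IsXWeak G x y ∨ IsXWeak G y x)

/-- A butterfly of the first kind with the given vertices. -/
def IsButterflyB1 {V : Type} [Fintype V] [DecidableEq V] (G : SimpleGraph V) [DecidableRel G.Adj]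
    (x y z v₁ v₂ v₃ : V) : Prop :=
  List.Pairwise (· ≠ ·) [x, y, z, v₁, v₂, v₃] ∧
  G.Adj x y ∧ G.Adj x z ∧ G.Adj y v₁ ∧ G.Adj y v₃ ∧ G.Adj z v₁ ∧ G.Adj z v₂ ∧
  G.Adj x v₁ ∧ G.Adj x v₂ ∧ G.Adj x v₃ ∧
  G.degree y = 3 ∧ G.degree z = 3 ∧ G.degree x = 8 ∧
  G.degree v₁ = 8 ∧ G.degree v₂ = 8 ∧ G.degree v₃ = 8

/-- A butterfly of the second kind with the given vertices. -/
def IsButterflyB2 {V : Type} [Fintype V] [DecidableEq V] (G : SimpleGraph V) [DecidableRel G.Adj]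
    (x y z v₁ v₂ v₃ v₄ : V) : Prop :=
  List.Pairwise (· ≠ ·) [x, y, z, v₁, v₂, v₃, v₄] ∧
  G.Adj x y ∧ G.Adj x z ∧ G.Adj y v₁ ∧ G.Adj y v₄ ∧ G.Adj z v₂ ∧ G.Adj z v₃ ∧
  G.Adj x v₁ ∧ G.Adj x v₂ ∧ G.Adj x v₃ ∧ G.Adj x v₄ ∧
  G.degree y = 3 ∧ G.degree z = 3 ∧ G.degree x = 8 ∧
  G.degree v₁ = 8 ∧ G.degree v₂ = 8 ∧ G.degree v₃ = 8 ∧ G.degree v₄ = 8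

/-- The pair `(x, y)` is the distinguished edge `xy` of some butterfly of `G`. -/
def IsButterflyLikeAt {V : Type} [Fintype V] [DecidableEq V] (G : SimpleGraph V)
    [DecidableRel G.Adj] (x y : V) : Prop :=
  (∃ z v₁ v₂ v₃, IsButterflyB1 G x y z v₁ v₂ v₃) ∨
  (∃ z v₁ v₂ v₃ v₄, IsButterflyB2 G x y z v₁ v₂ v₃ v₄)

/-- The edge `e` is butterfly-like. -/
def IsButterflyLike {V : Type} [Fintype V] [DecidableEq V] (G : SimpleGraph V)
    [DecidableRel G.Adj] (e : Sym2 V) : Prop :=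
  ∃ x y : V, e = s(x, y) ∧ IsButterflyLikeAt G x y

/-- An edge is reducible when it is weak or butterfly-like. -/
def IsReducible {V : Type} [Fintype V] [DecidableEq V] (G : SimpleGraph V) [DecidableRel G.Adj]
    (e : Sym2 V) : Prop :=
  IsWeakEdge G e ∨ IsButterflyLike G e

/-- Reversal of darts, as a permutation. -/
def dartRev {V : Type} (G : SimpleGraph V) : Equiv.Perm G.Dart :=
  ⟨SimpleGraph.Dart.symm, SimpleGraph.Dart.symm,
    fun d => SimpleGraph.Dart.symm_symm d, fun d => SimpleGraph.Dart.symm_symm d⟩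

/-- `ρ` is a rotation system of `G`: it permutes the darts around each vertex
in a single cycle. -/
def IsRotationSystem {V : Type} (G : SimpleGraph V) (ρ : Equiv.Perm G.Dart) : Prop :=
  (∀ d : G.Dart, (ρ d).fst = d.fst) ∧
    ∀ d d' : G.Dart, d.fst = d'.fst → ρ.SameCycle d d'

/-- The face permutation of a rotation system. -/
def facePerm {V : Type} (G : SimpleGraph V) (ρ : Equiv.Perm G.Dart) : Equiv.Perm G.Dart :=
  (dartRev G).trans ρ

/-- The setoid of darts whose classes are the faces of a combinatorial embedding. -/
def faceSetoid {V : Type} (G : SimpleGraph V) (ρ : Equiv.Perm G.Dart) : Setoid G.Dart :=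
  ⟨(facePerm G ρ).SameCycle, Equiv.Perm.SameCycle.equivalence _⟩

/-- The number of faces of a combinatorial embedding. -/
noncomputable def numFaces {V : Type} (G : SimpleGraph V) (ρ : Equiv.Perm G.Dart) : ℕ :=
  Nat.card (Quotient (faceSetoid G ρ))

/-- The number of isolated vertices of `G`. -/
noncomputable def numIsolated {V : Type} (G : SimpleGraph V) : ℕ :=
  Nat.card {v : V // ∀ w, ¬ G.Adj v w}

/-- The number of connected components of `G`. -/
noncomputable def numComponents {V : Type} (G : SimpleGraph V) : ℕ :=
  Nat.card G.ConnectedComponent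

/-- `G` is embeddable in an orientable surface of genus at most `g`: it has a combinatorial
embedding (rotation system) whose Euler characteristic, summed over components, is at least
`2 * (number of components) - 2 * g`. -/
def GenusLE {V : Type} (G : SimpleGraph V) (g : ℕ) : Prop :=
  ∃ ρ : Equiv.Perm G.Dart, IsRotationSystem G ρ ∧
    2 * (numComponents G : ℤ) - 2 * (g : ℤ) ≤
      (Nat.card V : ℤ) - (Nat.card G.edgeSet : ℤ) + ((numFaces G ρ + numIsolated G : ℕ) : ℤ)

/-- `G` is planar: it is embeddable in an orientable surface of genus `0`, i.e. the sphere. -/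
def IsPlanar {V : Type} (G : SimpleGraph V) : Prop := GenusLE G 0

/-- Color `c` is free at `v` (no colored edge incident to `v` has color `c`). -/
def freeAt {V : Type} {D : ℕ} (π : Sym2 V → Option (Fin D)) (v : V) (c : Fin D) : Prop :=
  ∀ e : Sym2 V, v ∈ e → π e ≠ some c

/-- The graph formed by the edges colored `a` or `b`; its components are the `(a,b)`-chains. -/
def chainGraph {V : Type} {D : ℕ} (π : Sym2 V → Option (Fin D)) (a b : Fin D) : SimpleGraph V :=
  SimpleGraph.fromEdgeSet {e | π e = some a ∨ π e = some b}

/-- `u` and `v` lie on the same `(a,b)`-chain. -/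
def chainReach {V : Type} {D : ℕ} (π : Sym2 V → Option (Fin D)) (a b : Fin D) (u v : V) : Prop :=
  (chainGraph π a b).Reachable u v

/-- `v` is an endpoint of its `(a,b)`-chain (it has at most one neighbor on the chain). -/
def chainEndpoint {V : Type} {D : ℕ} (π : Sym2 V → Option (Fin D)) (a b : Fin D) (v : V) : Prop :=
  ((chainGraph π a b).neighborSet v).Subsingleton

/-- There is an `(a,b)`-chain with endpoints `u` and `v`. -/
def chainPathEndpoints {V : Type} {D : ℕ} (π : Sym2 V → Option (Fin D)) (a b : Fin D)
    (u v : V) : Prop :=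
  u ≠ v ∧ chainReach π a b u v ∧ chainEndpoint π a b u ∧ chainEndpoint π a b v

/-- The `(a,b)`-chain containing `x` is a cycle (no vertex of it is an endpoint). -/
def inChainCycle {V : Type} {D : ℕ} (π : Sym2 V → Option (Fin D)) (a b : Fin D) (x : V) : Prop :=
  ∀ v, chainReach π a b x v → ¬ chainEndpoint π a b v

/-- The vertex `w` is at distance at most `k` from the edge `e`. -/
def vtxEdgeDistLE {V : Type} (G : SimpleGraph V) (k : ℕ) (w : V) (e : Sym2 V) : Prop :=
  ∃ u, u ∈ e ∧ ∃ p : G.Walk w u, p.length ≤ k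

/-- The edges `e₁` and `e₂` are at distance at most `k` from each other. -/
def edgeDistLE {V : Type} (G : SimpleGraph V) (k : ℕ) (e₁ e₂ : Sym2 V) : Prop :=
  ∃ u, u ∈ e₁ ∧ vtxEdgeDistLE G k u e₂

/-- The uncolored edge `xy` has type 0: `π` can be turned into a coloring additionally coloring
`xy` by recoloring only edges at distance at most 1 from `xy`. -/
def HasType0 {V : Type} (G : SimpleGraph V) (π : Sym2 V → Option (Fin 8)) (x y : V) : Prop :=
  ∃ σ : Sym2 V → Option (Fin 8), IsProperPEC G 8 σ ∧
    (∀ e, σ e ≠ none ↔ (π e ≠ none ∨ e = s(x, y))) ∧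
    (∀ e, ¬ edgeDistLE G 1 e s(x, y) → σ e = π e)

/-- The uncolored edge `xy` has type `1_{ab}`. -/
def HasType1 {V : Type} (π : Sym2 V → Option (Fin 8)) (x y : V) (a b : Fin 8) : Prop :=
  freeAt π x a ∧ freeAt π y b ∧ ¬ (chainReach π a b x y ∧ chainEndpoint π a b x)

/-- The uncolored edge `xy` has type `2_{ab}`. -/
def HasType2 {V : Type} (G : SimpleGraph V) (π : Sym2 V → Option (Fin 8)) (x y : V)
    (a b : Fin 8) : Prop :=
  freeAt π y a ∧ freeAt π y b ∧
  ∃ c : Fin 8, c ≠ b ∧ freeAt π x c ∧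
    ∃ z : V, G.Adj x z ∧ G.Adj y z ∧ π s(y, z) = some c ∧ π s(x, z) = some a ∧
      ¬ inChainCycle π a b x

/-- The uncolored edge `xy` has type `3_{ab}`. -/
def HasType3 {V : Type} (G : SimpleGraph V) (π : Sym2 V → Option (Fin 8)) (x y : V)
    (a b : Fin 8) : Prop :=
  freeAt π x a ∧ freeAt π y b ∧ chainPathEndpoints π a b x y ∧
  ∃ c : Fin 8, c ≠ b ∧ freeAt π y c ∧
    ∃ z : V, G.Adj x z ∧ freeAt π z b ∧ π s(x, z) = some c

/-- The uncolored edge `xy` has type `4_{ab}`. -/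
def HasType4 {V : Type} (G : SimpleGraph V) (π : Sym2 V → Option (Fin 8)) (x y : V)
    (a b : Fin 8) : Prop :=
  freeAt π y a ∧ freeAt π y b ∧ inChainCycle π a b x ∧
  ∃ c : Fin 8, freeAt π x c ∧
    ∃ z v : V, z ≠ v ∧ z ≠ x ∧ z ≠ y ∧ v ≠ x ∧ v ≠ y ∧
      G.Adj x v ∧ G.Adj z v ∧ π s(x, v) = some a ∧ π s(z, v) = some c ∧ freeAt π z b

/-- The uncolored edge `xy` has type `5_{ab}`. -/
def HasType5 {V : Type} (G : SimpleGraph V) (π : Sym2 V → Option (Fin 8)) (x y : V)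
    (a b : Fin 8) : Prop :=
  freeAt π y a ∧ freeAt π x b ∧ chainPathEndpoints π a b x y ∧
  ∃ c : Fin 8, c ≠ a ∧ freeAt π y c ∧
    ∃ z v : V, z ≠ v ∧ z ≠ x ∧ z ≠ y ∧ v ≠ x ∧ v ≠ y ∧
      G.Adj x v ∧ G.Adj z v ∧ π s(x, v) = some c ∧ π s(z, v) = some a ∧
      freeAt π z b ∧ freeAt π z c

/-- The uncolored edge `xy` has type `6_{abcd}`. -/
def HasType6 {V : Type} (G : SimpleGraph V) (π : Sym2 V → Option (Fin 8)) (x y : V)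
    (a b c d : Fin 8) : Prop :=
  freeAt π y a ∧ freeAt π y c ∧ freeAt π y d ∧ freeAt π x b ∧
  chainPathEndpoints π a b x y ∧ inChainCycle π c d x ∧
  ∃ z v₁ v₂ : V, z ≠ v₁ ∧ z ≠ v₂ ∧ v₁ ≠ v₂ ∧ z ≠ x ∧ z ≠ y ∧ v₁ ≠ x ∧ v₁ ≠ y ∧ v₂ ≠ x ∧ v₂ ≠ y ∧
    G.Adj x v₁ ∧ G.Adj x v₂ ∧ G.Adj z v₁ ∧ G.Adj z v₂ ∧
    π s(x, v₁) = some c ∧ π s(x, v₂) = some a ∧ π s(z, v₁) = some a ∧ π s(z, v₂) = some c ∧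
    freeAt π z b ∧ freeAt π z d


/-! ### Auxiliary machinery for `stmt15` -/

namespace Stmt15Aux

open SimpleGraph

variable {V : Type}

/-- The goal: a proper coloring whose support is that of `π` plus `e`. -/
def Extends (G : SimpleGraph V) (π : Sym2 V → Option (Fin 8)) (e : Sym2 V) : Prop :=
  ∃ σ : Sym2 V → Option (Fin 8), IsProperPEC G 8 σ ∧
    ∀ e', (σ e' ≠ none ↔ (π e' ≠ none ∨ e' = e))

lemma Extends.of_supportEq {G : SimpleGraph V} {π π' : Sym2 V → Option (Fin 8)} {e : Sym2 V}
    (hsupp : ∀ e', π' e' ≠ none ↔ π e' ≠ none) (h : Extends G π' e) : Extends G π e := by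
  obtain ⟨σ, h1, h2⟩ := h
  exact ⟨σ, h1, fun e' => by rw [h2 e', hsupp e']⟩

lemma mem_edge_exists (G : SimpleGraph V) {e : Sym2 V} (he : e ∈ G.edgeSet) {x : V}
    (hx : x ∈ e) : ∃ v, G.Adj x v ∧ e = s(x, v) := by
  induction e using Sym2.ind with
  | _ a b =>
    rw [SimpleGraph.mem_edgeSet] at he
    rcases Sym2.mem_iff.mp hx with rfl | rfl
    · exact ⟨b, he, rfl⟩
    · exact ⟨a, he.symm, Sym2.eq_swap⟩

lemma free_of_unique {G : SimpleGraph V} {π : Sym2 V → Option (Fin 8)}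
    (hp : IsProperPEC G 8 π) {e0 : Sym2 V} {d : Fin 8} (h : π e0 = some d) {x : V}
    (hx : x ∈ e0) : ∀ e, x ∈ e → e ≠ e0 → π e ≠ some d := by
  intro e hxe hne heq
  exact hp.2 e e0 hne ⟨x, hxe, hx⟩ (by simp [heq]) (by rw [heq, h])

variable [DecidableEq V]

/-- Update a single edge. -/
def upd1 (π : Sym2 V → Option (Fin 8)) (e0 : Sym2 V) (t : Fin 8) : Sym2 V → Option (Fin 8) :=
  fun e => if e = e0 then some t else π e

lemma upd1_apply_same (π : Sym2 V → Option (Fin 8)) (e0 : Sym2 V) (t : Fin 8) :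
    upd1 π e0 t e0 = some t := by simp [upd1]

lemma upd1_apply_other (π : Sym2 V → Option (Fin 8)) {e0 e : Sym2 V} (t : Fin 8) (h : e ≠ e0) :
    upd1 π e0 t e = π e := by simp [upd1, h]

lemma upd1_proper {G : SimpleGraph V} {π : Sym2 V → Option (Fin 8)} (hp : IsProperPEC G 8 π)
    {e0 : Sym2 V} (he0 : e0 ∈ G.edgeSet) {t : Fin 8}
    (hfree : ∀ v ∈ e0, freeAt π v t) : IsProperPEC G 8 (upd1 π e0 t) := by
  constructor
  · intro e he
    by_cases h : e = e0
    · rwa [h]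
    · exact hp.1 e (by rwa [upd1_apply_other _ _ h] at he)
  · intro e1 e2 hne ⟨v, hv1, hv2⟩ hcol
    by_cases h1 : e1 = e0
    · subst h1
      rw [upd1_apply_same, upd1_apply_other _ _ (Ne.symm hne)]
      · exact fun h => hfree v hv1 e2 hv2 h.symm
    · rw [upd1_apply_other _ _ h1] at hcol ⊢
      by_cases h2 : e2 = e0
      · subst h2
        rw [upd1_apply_same]
        exact fun h => hfree v hv2 e1 hv1 h
      · rw [upd1_apply_other _ _ h2]
        exact hp.2 e1 e2 hne ⟨v, hv1, hv2⟩ hcol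

end Stmt15Aux

namespace Stmt15Aux

open SimpleGraph

variable {V : Type} [DecidableEq V]

/-- Update two edges (rotation at a common vertex). -/
def upd2 (π : Sym2 V → Option (Fin 8)) (ea eb : Sym2 V) (ta tb : Fin 8) :
    Sym2 V → Option (Fin 8) :=
  fun e => if e = ea then some ta else if e = eb then some tb else π e

lemma upd2_apply_a (π : Sym2 V → Option (Fin 8)) (ea eb : Sym2 V) (ta tb : Fin 8) :
    upd2 π ea eb ta tb ea = some ta := by simp [upd2]

lemma upd2_apply_b (π : Sym2 V → Option (Fin 8)) {ea eb : Sym2 V} (ta tb : Fin 8)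
    (h : eb ≠ ea) : upd2 π ea eb ta tb eb = some tb := by simp [upd2, h]

lemma upd2_apply_other (π : Sym2 V → Option (Fin 8)) {ea eb e : Sym2 V} (ta tb : Fin 8)
    (ha : e ≠ ea) (hb : e ≠ eb) : upd2 π ea eb ta tb e = π e := by simp [upd2, ha, hb]

lemma upd2_proper {G : SimpleGraph V} {π : Sym2 V → Option (Fin 8)} (hp : IsProperPEC G 8 π)
    {ea eb : Sym2 V} {ta tb : Fin 8}
    (hne : ea ≠ eb) (hea : ea ∈ G.edgeSet) (heb : eb ∈ G.edgeSet)
    (hta : ∀ v ∈ ea, ∀ e, v ∈ e → e ≠ ea → e ≠ eb → π e ≠ some ta)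
    (htb : ∀ v ∈ eb, ∀ e, v ∈ e → e ≠ ea → e ≠ eb → π e ≠ some tb)
    (htab : ta ≠ tb) : IsProperPEC G 8 (upd2 π ea eb ta tb) := by
  constructor
  · intro e he
    by_cases h1 : e = ea
    · rwa [h1]
    by_cases h2 : e = eb
    · rwa [h2]
    exact hp.1 e (by rwa [upd2_apply_other _ _ _ h1 h2] at he)
  · intro e1 e2 h12 ⟨v, hv1, hv2⟩ hcol
    by_cases h1a : e1 = ea
    · subst h1a
      rw [upd2_apply_a]
      by_cases h2b : e2 = eb
      · subst h2b; rw [upd2_apply_b _ _ _ (Ne.symm hne)]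
        simpa using htab
      · rw [upd2_apply_other _ _ _ (Ne.symm h12) h2b]
        exact fun h => hta v hv1 e2 hv2 (Ne.symm h12) h2b h.symm
    by_cases h1b : e1 = eb
    · subst h1b
      rw [upd2_apply_b _ _ _ h1a]
      by_cases h2a : e2 = ea
      · subst h2a; rw [upd2_apply_a]
        simpa using (Ne.symm htab)
      · rw [upd2_apply_other _ _ _ h2a (Ne.symm h12)]
        exact fun h => htb v hv1 e2 hv2 h2a (Ne.symm h12) h.symm
    rw [upd2_apply_other _ _ _ h1a h1b] at hcol ⊢
    by_cases h2a : e2 = ea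
    · subst h2a; rw [upd2_apply_a]
      exact fun h => hta v hv2 e1 hv1 h1a h1b h
    by_cases h2b : e2 = eb
    · subst h2b; rw [upd2_apply_b _ _ _ (Ne.symm hne)]
      exact fun h => htb v hv2 e1 hv1 h1a h1b h
    rw [upd2_apply_other _ _ _ h2a h2b]
    exact hp.2 e1 e2 h12 ⟨v, hv1, hv2⟩ hcol

end Stmt15Aux

namespace Stmt15Aux

open SimpleGraph

variable {V : Type}

open scoped Classical in
/-- Swap colors `g`,`c` on the `(g,c)`-chain component containing `z₀`. -/
noncomputable def swapcc (π : Sym2 V → Option (Fin 8)) (g c : Fin 8) (z₀ : V) :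
    Sym2 V → Option (Fin 8) :=
  fun e =>
    if (π e = some g ∨ π e = some c) ∧ (∃ v ∈ e, chainReach π g c z₀ v) then
      (if π e = some g then some c else some g)
    else π e

section Swap

variable {G : SimpleGraph V} {π : Sym2 V → Option (Fin 8)} {g c : Fin 8} {z₀ : V}

lemma chain_adj (hp : IsProperPEC G 8 π) {a b : V}
    (h : π s(a, b) = some g ∨ π s(a, b) = some c) : (chainGraph π g c).Adj a b := by
  have hne : a ≠ b := by
    have hmem : s(a, b) ∈ G.edgeSet := hp.1 _ (by rcases h with h | h <;> simp [h])
    exact (G.mem_edgeSet.mp hmem).ne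
  exact (SimpleGraph.fromEdgeSet_adj _).mpr ⟨h, hne⟩

/-- Reachability propagates across a chain-colored edge. -/
lemma reach_other (hp : IsProperPEC G 8 π) {e : Sym2 V}
    (h : π e = some g ∨ π e = some c) {v w : V} (hv : v ∈ e) (hw : w ∈ e)
    (hr : chainReach π g c z₀ v) : chainReach π g c z₀ w := by
  induction e using Sym2.ind with
  | _ a b =>
    rcases Sym2.mem_iff.mp hv with rfl | rfl <;> rcases Sym2.mem_iff.mp hw with rfl | rfl
    · exact hr
    · exact hr.trans (chain_adj hp h).reachable
    · exact hr.trans (chain_adj hp h).symm.reachable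
    · exact hr

lemma swapcc_eq_of_not_chain {e : Sym2 V} (h1 : π e ≠ some g) (h2 : π e ≠ some c) :
    swapcc π g c z₀ e = π e := by
  simp only [swapcc]
  rw [if_neg]
  rintro ⟨h | h, -⟩ <;> [exact h1 h; exact h2 h]

lemma swapcc_eq_of_not_reach (hp : IsProperPEC G 8 π) {e : Sym2 V} {v : V} (hv : v ∈ e)
    (h : ¬ chainReach π g c z₀ v) : swapcc π g c z₀ e = π e := by
  simp only [swapcc]
  rw [if_neg]
  rintro ⟨hcol, u, hu, hr⟩
  exact h (reach_other hp hcol hu hv hr)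

lemma swapcc_eq_g (hge : g ≠ c) {e : Sym2 V} {v : V} (hv : v ∈ e)
    (hr : chainReach π g c z₀ v) (h : π e = some g) : swapcc π g c z₀ e = some c := by
  simp only [swapcc]
  rw [if_pos ⟨Or.inl h, v, hv, hr⟩, if_pos h]

lemma swapcc_eq_c (hge : g ≠ c) {e : Sym2 V} {v : V} (hv : v ∈ e)
    (hr : chainReach π g c z₀ v) (h : π e = some c) : swapcc π g c z₀ e = some g := by
  simp only [swapcc]
  rw [if_pos ⟨Or.inr h, v, hv, hr⟩, if_neg]
  intro hh
  rw [h] at hh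
  exact hge (Option.some.inj hh).symm

lemma swapcc_cases (π : Sym2 V → Option (Fin 8)) (g c : Fin 8) (z₀ : V) (e : Sym2 V) :
    (swapcc π g c z₀ e = π e) ∨
      (((π e = some g ∧ swapcc π g c z₀ e = some c) ∨
        (π e = some c ∧ swapcc π g c z₀ e = some g)) ∧ ∃ v ∈ e, chainReach π g c z₀ v) := by
  simp only [swapcc]
  by_cases h : (π e = some g ∨ π e = some c) ∧ (∃ v ∈ e, chainReach π g c z₀ v)
  · rw [if_pos h]
    obtain ⟨hc, hex⟩ := h
    rcases hc with hc | hc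
    · exact Or.inr ⟨Or.inl ⟨hc, by rw [if_pos hc]⟩, hex⟩
    · by_cases hgc : π e = some g
      · exact Or.inr ⟨Or.inl ⟨hgc, by rw [if_pos hgc]⟩, hex⟩
      · exact Or.inr ⟨Or.inr ⟨hc, by rw [if_neg hgc]⟩, hex⟩
  · rw [if_neg h]; exact Or.inl rfl

lemma swapcc_support (π : Sym2 V → Option (Fin 8)) (g c : Fin 8) (z₀ : V) (e : Sym2 V) :
    swapcc π g c z₀ e ≠ none ↔ π e ≠ none := by
  rcases swapcc_cases π g c z₀ e with h | ⟨h, -⟩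
  · rw [h]
  · rcases h with ⟨h1, h2⟩ | ⟨h1, h2⟩ <;> simp [h1, h2]

lemma swapcc_chain_mem {e : Sym2 V} (h : swapcc π g c z₀ e ≠ π e) :
    (π e = some g ∨ π e = some c) ∧ ∀ v ∈ e, IsProperPEC G 8 π → chainReach π g c z₀ v := by
  rcases swapcc_cases π g c z₀ e with hh | ⟨hh, u, hu, hr⟩
  · exact absurd hh h
  · refine ⟨by tauto, fun v hv hp => reach_other hp (by tauto) hu hv hr⟩

lemma swapcc_proper (hp : IsProperPEC G 8 π) (hgc : g ≠ c) :
    IsProperPEC G 8 (swapcc π g c z₀) := by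
  constructor
  · intro e he
    exact hp.1 e (by rwa [← swapcc_support π g c z₀ e])
  · intro e1 e2 hne ⟨v, hv1, hv2⟩ hcol
    have hcol1 : π e1 ≠ none := by rwa [swapcc_support] at hcol
    rcases swapcc_cases π g c z₀ e1 with H1 | ⟨H1, u1, hu1, hr1⟩ <;>
      rcases swapcc_cases π g c z₀ e2 with H2 | ⟨H2, u2, hu2, hr2⟩
    · rw [H1, H2]; exact hp.2 e1 e2 hne ⟨v, hv1, hv2⟩ hcol1
    · -- e1 not flipped, e2 flipped
      rw [H1]
      have hv_reach : chainReach π g c z₀ v := reach_other hp (by tauto) hu2 hv2 hr2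
      -- if e1 were chain colored it would flip too
      have h1nc : π e1 ≠ some g ∧ π e1 ≠ some c := by
        constructor <;> intro hh
        · rw [swapcc_eq_g hgc hv1 hv_reach hh, hh] at H1
          exact hgc (Option.some.inj H1).symm
        · rw [swapcc_eq_c hgc hv1 hv_reach hh, hh] at H1
          exact hgc (Option.some.inj H1)
      rcases H2 with ⟨-, h2⟩ | ⟨-, h2⟩ <;> rw [h2]
      · exact h1nc.2
      · exact h1nc.1
    · -- e1 flipped, e2 not flipped
      rw [H2]
      have hv_reach : chainReach π g c z₀ v := reach_other hp (by tauto) hu1 hv1 hr1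
      have h2nc : π e2 ≠ some g ∧ π e2 ≠ some c := by
        constructor <;> intro hh
        · rw [swapcc_eq_g hgc hv2 hv_reach hh, hh] at H2
          exact hgc (Option.some.inj H2).symm
        · rw [swapcc_eq_c hgc hv2 hv_reach hh, hh] at H2
          exact hgc (Option.some.inj H2)
      rcases H1 with ⟨-, h1⟩ | ⟨-, h1⟩ <;> rw [h1]
      · exact fun hh => h2nc.2 hh.symm
      · exact fun hh => h2nc.1 hh.symm
    · -- both flipped
      have hppi : π e1 ≠ π e2 := hp.2 e1 e2 hne ⟨v, hv1, hv2⟩ (show π e1 ≠ none by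
        rcases H1 with ⟨h1, -⟩ | ⟨h1, -⟩ <;> simp [h1])
      rcases H1 with ⟨h1, h1'⟩ | ⟨h1, h1'⟩ <;> rcases H2 with ⟨h2, h2'⟩ | ⟨h2, h2'⟩
      · exact absurd (h1.trans h2.symm) hppi
      · rw [h1', h2']
        exact fun hh => hgc (Option.some.inj hh).symm
      · rw [h1', h2']
        exact fun hh => hgc (Option.some.inj hh)
      · exact absurd (h1.trans h2.symm) hppi

end Swap

end Stmt15Aux

namespace Stmt15Aux

open SimpleGraph

variable {V : Type} [DecidableEq V] {G : SimpleGraph V} {π : Sym2 V → Option (Fin 8)}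

/-- Color an uncolored edge with a color free at both endpoints. -/
lemma extends_of_free (hp : IsProperPEC G 8 π) {x y : V} (hadj : G.Adj x y)
    (hun : π s(x, y) = none) {t : Fin 8} (hx : freeAt π x t) (hy : freeAt π y t) :
    Extends G π s(x, y) := by
  refine ⟨upd1 π s(x, y) t, ?_, ?_⟩
  · refine upd1_proper hp (G.mem_edgeSet.mpr hadj) ?_
    intro v hv
    rcases Sym2.mem_iff.mp hv with rfl | rfl
    · exact hx
    · exact hy
  · intro e'
    by_cases h : e' = s(x, y)
    · subst h; rw [upd1_apply_same]; simp
    · rw [upd1_apply_other _ _ h]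
      simp [h]

lemma swapcc_free_center (hp : IsProperPEC G 8 π) {g c : Fin 8} (hgc : g ≠ c) {z₀ : V}
    (hf : freeAt π z₀ g) : freeAt (swapcc π g c z₀) z₀ c := by
  intro e hv heq
  rcases swapcc_cases π g c z₀ e with H | ⟨H, -⟩
  · rw [H] at heq
    have := swapcc_eq_c hgc hv (Reachable.refl z₀) heq
    rw [H, heq] at this
    exact hgc (Option.some.inj this).symm
  · rcases H with ⟨h1, -⟩ | ⟨-, h2⟩
    · exact hf e hv h1
    · rw [h2] at heq
      exact hgc (Option.some.inj heq)

lemma swapcc_free_far (hp : IsProperPEC G 8 π) {g c t : Fin 8} {z₀ v : V}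
    (hnr : ¬ chainReach π g c z₀ v) (hf : freeAt π v t) : freeAt (swapcc π g c z₀) v t := by
  intro e hv
  rw [swapcc_eq_of_not_reach hp hv hnr]
  exact hf e hv

/-- Kempe-chain swap extension: `m` free at `x`, `t` free at `y`, and `x`, `y` not on a
common `(m,t)`-chain. -/
lemma extends_of_unreach (hp : IsProperPEC G 8 π) {x y : V} (hadj : G.Adj x y)
    (hun : π s(x, y) = none) {m t : Fin 8} (hm : freeAt π x m) (ht : freeAt π y t)
    (hmt : m ≠ t) (hnr : ¬ chainReach π m t x y) : Extends G π s(x, y) := by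
  have hprop := swapcc_proper (z₀ := x) hp hmt
  have hx : freeAt (swapcc π m t x) x t := swapcc_free_center hp hmt hm
  have hy : freeAt (swapcc π m t x) y t := swapcc_free_far hp hnr ht
  have hun' : swapcc π m t x s(x, y) = none := by
    rw [swapcc_eq_of_not_chain (by simp [hun]) (by simp [hun])]
    exact hun
  exact Extends.of_supportEq (fun e' => swapcc_support π m t x e')
    (extends_of_free hprop hadj hun' hx hy)

end Stmt15Aux

namespace Stmt15Aux

open SimpleGraph

variable {V : Type}

section ThreeEndpoints

variable {H : SimpleGraph V}

lemma internal_two_nbrs {s t v : V} (P : H.Walk s t) :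
    P.IsPath → v ∈ P.support → v ≠ s → v ≠ t →
    ∃ a b, a ≠ b ∧ H.Adj v a ∧ H.Adj v b ∧ a ∈ P.support ∧ b ∈ P.support := by
  induction P with
  | nil =>
    intro hP hv hvs hvt
    simp only [SimpleGraph.Walk.support_nil, List.mem_singleton] at hv
    exact absurd hv hvs
  | @cons a b t' h P' ih =>
    intro hP hv hvs hvt
    rw [SimpleGraph.Walk.support_cons] at hv
    rcases List.mem_cons.mp hv with rfl | hv'
    · exact absurd rfl hvs
    by_cases hvb : v = b
    · subst hvb
      have hbt : v ≠ t' := hvt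
      have hl : 0 < P'.length := by
        rcases Nat.eq_zero_or_pos P'.length with h0 | h0
        · exact absurd (SimpleGraph.Walk.eq_of_length_eq_zero h0) hbt
        · exact h0
      have hadj2 : H.Adj v (P'.getVert 1) := by
        have := P'.adj_getVert_succ hl
        rwa [SimpleGraph.Walk.getVert_zero] at this
      have hmem2 : P'.getVert 1 ∈ P'.support :=
        SimpleGraph.Walk.mem_support_iff_exists_getVert.mpr ⟨1, rfl, hl⟩
      have hane : a ≠ P'.getVert 1 := by
        intro hh
        have : a ∉ P'.support := ((SimpleGraph.Walk.cons_isPath_iff h P').mp hP).2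
        exact this (hh ▸ hmem2)
      refine ⟨a, P'.getVert 1, hane, h.symm, hadj2, ?_, ?_⟩
      · rw [SimpleGraph.Walk.support_cons]; exact List.mem_cons_self
      · rw [SimpleGraph.Walk.support_cons]; exact List.mem_cons_of_mem _ hmem2
    · obtain ⟨a1, b1, hab, ha1, hb1, hm1, hm2⟩ :=
        ih ((SimpleGraph.Walk.cons_isPath_iff h P').mp hP).1 hv' hvb hvt
      refine ⟨a1, b1, hab, ha1, hb1, ?_, ?_⟩ <;> rw [SimpleGraph.Walk.support_cons]
      · exact List.mem_cons_of_mem _ hm1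
      · exact List.mem_cons_of_mem _ hm2

lemma no_escape
    (hdeg : ∀ v a b c', H.Adj v a → H.Adj v b → H.Adj v c' → a = b ∨ a = c' ∨ b = c') :
    ∀ {s y : V} (Q : H.Walk s y), Q.IsPath → ∀ {z : V},
      (∀ a b, H.Adj y a → H.Adj y b → a = b) → (∀ a b, H.Adj z a → H.Adj z b → a = b) →
      y ≠ z → ∀ (P : H.Walk y z), P.IsPath → s ∉ P.support → False := by
  intro s y Q
  induction Q with
  | nil =>
    intro _ z _ _ _ P _ hs
    exact hs P.start_mem_support
  | @cons a b y h Q' ih =>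
    intro hQ z Epy Epz hyz P hP hs
    by_cases hb : b ∈ P.support
    · by_cases hby : b = y
      · have hl : 0 < P.length := by
          rcases Nat.eq_zero_or_pos P.length with h0 | h0
          · exact absurd (SimpleGraph.Walk.eq_of_length_eq_zero h0) hyz
          · exact h0
        have hadj2 : H.Adj y (P.getVert 1) := by
          have := P.adj_getVert_succ hl
          rwa [SimpleGraph.Walk.getVert_zero] at this
        have hadjya : H.Adj y a := hby ▸ h.symm
        have hmem2 : P.getVert 1 ∈ P.support :=
          SimpleGraph.Walk.mem_support_iff_exists_getVert.mpr ⟨1, rfl, hl⟩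
        exact hs ((Epy a (P.getVert 1) hadjya hadj2) ▸ hmem2)
      by_cases hbz : b = z
      · have hl : 0 < P.reverse.length := by
          rw [SimpleGraph.Walk.length_reverse]
          rcases Nat.eq_zero_or_pos P.length with h0 | h0
          · exact absurd (SimpleGraph.Walk.eq_of_length_eq_zero h0) hyz
          · exact h0
        have hadj2 : H.Adj z (P.reverse.getVert 1) := by
          have := P.reverse.adj_getVert_succ hl
          rwa [SimpleGraph.Walk.getVert_zero] at this
        have hadjza : H.Adj z a := hbz ▸ h.symm
        have hmem2 : P.reverse.getVert 1 ∈ P.reverse.support :=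
          SimpleGraph.Walk.mem_support_iff_exists_getVert.mpr ⟨1, rfl, hl⟩
        rw [SimpleGraph.Walk.support_reverse, List.mem_reverse] at hmem2
        exact hs ((Epz a (P.reverse.getVert 1) hadjza hadj2) ▸ hmem2)
      · obtain ⟨a1, b1, hab, ha1, hb1, hm1, hm2⟩ := internal_two_nbrs P hP hb hby hbz
        rcases hdeg b a a1 b1 h.symm ha1 hb1 with h' | h' | h'
        · exact hs (h' ▸ hm1)
        · exact hs (h' ▸ hm2)
        · exact hab h'
    · exact ih ((SimpleGraph.Walk.cons_isPath_iff h Q').mp hQ).1 Epy Epz hyz P hP hb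

/-- Three distinct, pairwise-reachable "endpoint" vertices in a max-degree-2 graph:
impossible. -/
lemma three_endpoints [DecidableEq V] {x y z : V}
    (hdeg : ∀ v a b c', H.Adj v a → H.Adj v b → H.Adj v c' → a = b ∨ a = c' ∨ b = c')
    (Epx : ∀ a b, H.Adj x a → H.Adj x b → a = b)
    (Epy : ∀ a b, H.Adj y a → H.Adj y b → a = b)
    (Epz : ∀ a b, H.Adj z a → H.Adj z b → a = b)
    (hxy : x ≠ y) (hxz : x ≠ z) (hyz : y ≠ z)
    (hrxy : H.Reachable x y) (hrxz : H.Reachable x z) : False := by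
  obtain ⟨W⟩ := hrxy.symm.trans hrxz
  set P := W.toPath with hPdef
  have hxP : x ∉ (P : H.Walk y z).support := by
    intro hv
    obtain ⟨a, b, hab, ha, hb, -, -⟩ := internal_two_nbrs _ P.2 hv hxy hxz
    exact hab (Epx a b ha hb)
  obtain ⟨W2⟩ := hrxy
  exact no_escape hdeg W2.toPath.1 W2.toPath.2 Epy Epz hyz (P : H.Walk y z) P.2 hxP

end ThreeEndpoints

section ChainThree

variable {G : SimpleGraph V} {π : Sym2 V → Option (Fin 8)} {g c : Fin 8}

lemma chain_key (hp : IsProperPEC G 8 π) {v p q : V}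
    (hp' : (chainGraph π g c).Adj v p) (hq : (chainGraph π g c).Adj v q)
    (heq : π s(v, p) = π s(v, q)) : p = q := by
  by_contra hne
  obtain ⟨hcp, -⟩ := (SimpleGraph.fromEdgeSet_adj _).mp hp'
  have hEne : s(v, p) ≠ s(v, q) := fun hh => hne (Sym2.congr_right.mp hh)
  exact hp.2 s(v, p) s(v, q) hEne ⟨v, by simp, by simp⟩
    (by rcases hcp with h | h <;> simp [h]) heq

lemma chain_deg2 (hp : IsProperPEC G 8 π) :
    ∀ v a b c', (chainGraph π g c).Adj v a → (chainGraph π g c).Adj v b →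
      (chainGraph π g c).Adj v c' → a = b ∨ a = c' ∨ b = c' := by
  intro v a b c' ha hb hc
  obtain ⟨hca, -⟩ := (SimpleGraph.fromEdgeSet_adj _).mp ha
  obtain ⟨hcb, -⟩ := (SimpleGraph.fromEdgeSet_adj _).mp hb
  obtain ⟨hcc, -⟩ := (SimpleGraph.fromEdgeSet_adj _).mp hc
  rcases hca with h1 | h1 <;> rcases hcb with h2 | h2 <;> rcases hcc with h3 | h3
  · exact Or.inl (chain_key hp ha hb (h1.trans h2.symm))
  · exact Or.inl (chain_key hp ha hb (h1.trans h2.symm))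
  · exact Or.inr (Or.inl (chain_key hp ha hc (h1.trans h3.symm)))
  · exact Or.inr (Or.inr (chain_key hp hb hc (h2.trans h3.symm)))
  · exact Or.inr (Or.inr (chain_key hp hb hc (h2.trans h3.symm)))
  · exact Or.inr (Or.inl (chain_key hp ha hc (h1.trans h3.symm)))
  · exact Or.inl (chain_key hp ha hb (h1.trans h2.symm))
  · exact Or.inl (chain_key hp ha hb (h1.trans h2.symm))

lemma chain_endpoint_prop (hp : IsProperPEC G 8 π) {v : V}
    (hf : freeAt π v g ∨ freeAt π v c) :
    ∀ a b, (chainGraph π g c).Adj v a → (chainGraph π g c).Adj v b → a = b := by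
  intro a b ha hb
  obtain ⟨hca, -⟩ := (SimpleGraph.fromEdgeSet_adj _).mp ha
  obtain ⟨hcb, -⟩ := (SimpleGraph.fromEdgeSet_adj _).mp hb
  apply chain_key hp ha hb
  rcases hf with hf | hf
  · rcases hca with h1 | h1
    · exact absurd h1 (hf _ (by simp))
    · rcases hcb with h2 | h2
      · exact absurd h2 (hf _ (by simp))
      · rw [h1, h2]
  · rcases hca with h1 | h1
    · rcases hcb with h2 | h2
      · rw [h1, h2]
      · exact absurd h2 (hf _ (by simp))
    · exact absurd h1 (hf _ (by simp))

/-- The three-endpoint contradiction for Kempe chains. -/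
lemma chain_three [DecidableEq V] (hp : IsProperPEC G 8 π) {x y z : V}
    (hx : freeAt π x g ∨ freeAt π x c) (hy : freeAt π y g ∨ freeAt π y c)
    (hz : freeAt π z g ∨ freeAt π z c)
    (hxy : x ≠ y) (hxz : x ≠ z) (hyz : y ≠ z)
    (hrxy : chainReach π g c x y) (hrxz : chainReach π g c x z) : False :=
  three_endpoints (chain_deg2 hp) (chain_endpoint_prop hp hx) (chain_endpoint_prop hp hy)
    (chain_endpoint_prop hp hz) hxy hxz hyz hrxy hrxz

end ChainThree

end Stmt15Aux

namespace Stmt15Aux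

open SimpleGraph

variable {V : Type}

lemma sym2_ne_of_ne {a b c d : V} (h1 : a ≠ c ∨ b ≠ d) (h2 : a ≠ d ∨ b ≠ c) :
    s(a, b) ≠ s(c, d) := by
  intro hh
  rcases Sym2.eq_iff.mp hh with ⟨e1, e2⟩ | ⟨e1, e2⟩ <;> tauto

lemma colors_ne {G : SimpleGraph V} {π : Sym2 V → Option (Fin 8)} (hp : IsProperPEC G 8 π)
    {e1 e2 : Sym2 V} (hne : e1 ≠ e2) {v : V} (hv1 : v ∈ e1) (hv2 : v ∈ e2)
    {c1 c2 : Fin 8} (h1 : π e1 = some c1) (h2 : π e2 = some c2) : c1 ≠ c2 := by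
  intro heq
  exact hp.2 e1 e2 hne ⟨v, hv1, hv2⟩ (by simp [h1]) (by rw [h1, h2, heq])

lemma exists_free [Fintype V] [DecidableEq V] {G : SimpleGraph V} [DecidableRel G.Adj]
    {π : Sym2 V → Option (Fin 8)} (hp : IsProperPEC G 8 π) {x y : V}
    (hdeg : G.degree x ≤ 8) (hadj : G.Adj x y) (hun : π s(x, y) = none) :
    ∃ a : Fin 8, freeAt π x a := by
  classical
  set A : Finset (Option (Fin 8)) := (G.neighborFinset x).image (fun v => π s(x, v)) with hA
  have hcard : A.card ≤ 8 := le_trans (Finset.card_image_le) (by rwa [G.card_neighborFinset_eq_degree])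
  have : ∃ o : Option (Fin 8), o ∉ A := by
    by_contra h
    push_neg at h
    have hsub : (Finset.univ : Finset (Option (Fin 8))) ⊆ A := fun o _ => h o
    have := Finset.card_le_card hsub
    rw [Finset.card_univ] at this
    simp only [Fintype.card_option, Fintype.card_fin] at this
    omega
  obtain ⟨o, ho⟩ := this
  match o with
  | none =>
    exfalso
    exact ho (Finset.mem_image.mpr ⟨y, (G.mem_neighborFinset x y).mpr hadj, hun⟩)
  | some a =>
    refine ⟨a, fun e hx heq => ?_⟩
    have hmem : e ∈ G.edgeSet := hp.1 e (by simp [heq])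
    obtain ⟨v, hadj', rfl⟩ := mem_edge_exists G hmem hx
    exact ho (Finset.mem_image.mpr ⟨v, (G.mem_neighborFinset x v).mpr hadj', heq⟩)

lemma nbrs_of_deg3 [Fintype V] [DecidableEq V] {G : SimpleGraph V} [DecidableRel G.Adj]
    {y n1 n2 n3 : V} (hdeg : G.degree y = 3) (h1 : G.Adj y n1) (h2 : G.Adj y n2)
    (h3 : G.Adj y n3) (d12 : n1 ≠ n2) (d13 : n1 ≠ n3) (d23 : n2 ≠ n3) :
    ∀ v, G.Adj y v → v = n1 ∨ v = n2 ∨ v = n3 := by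
  have hsub : ({n1, n2, n3} : Finset V) ⊆ G.neighborFinset y := by
    intro v hv
    simp only [Finset.mem_insert, Finset.mem_singleton] at hv
    rcases hv with rfl | rfl | rfl <;> simp [G.mem_neighborFinset, h1, h2, h3]
  have hcard : ({n1, n2, n3} : Finset V).card = 3 := by
    rw [Finset.card_insert_of_notMem (by simp [d12, d13]),
      Finset.card_insert_of_notMem (by simp [d23]), Finset.card_singleton]
  have heq : ({n1, n2, n3} : Finset V) = G.neighborFinset y :=
    Finset.eq_of_subset_of_card_le hsub
      (by rw [G.card_neighborFinset_eq_degree, hdeg, hcard])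
  intro v hv
  have : v ∈ ({n1, n2, n3} : Finset V) := heq ▸ (G.mem_neighborFinset y v).mpr hv
  simpa using this

lemma free_of_nbrs {G : SimpleGraph V} {π' : Sym2 V → Option (Fin 8)}
    (hp : IsProperPEC G 8 π') {w n1 n2 n3 : V}
    (hnb : ∀ v, G.Adj w v → v = n1 ∨ v = n2 ∨ v = n3) {t : Fin 8}
    (h1 : π' s(w, n1) ≠ some t) (h2 : π' s(w, n2) ≠ some t) (h3 : π' s(w, n3) ≠ some t) :
    freeAt π' w t := by
  intro e hw heq
  have hmem : e ∈ G.edgeSet := hp.1 e (by simp [heq])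
  obtain ⟨v, hadj', rfl⟩ := mem_edge_exists G hmem hw
  rcases hnb v hadj' with rfl | rfl | rfl
  · exact h1 heq
  · exact h2 heq
  · exact h3 heq

end Stmt15Aux

namespace Stmt15Aux

open SimpleGraph

variable {V : Type} [DecidableEq V]

lemma upd2_support {π : Sym2 V → Option (Fin 8)} {ea eb : Sym2 V} {ta tb : Fin 8}
    (ha : π ea ≠ none) (hb : π eb ≠ none) :
    ∀ e, upd2 π ea eb ta tb e ≠ none ↔ π e ≠ none := by
  intro e
  by_cases h1 : e = ea
  · subst h1; rw [upd2_apply_a]; simp [ha]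
  by_cases h2 : e = eb
  · subst h2; rw [upd2_apply_b _ _ _ (fun hh => h1 hh)]; simp [hb]
  · rw [upd2_apply_other _ _ _ h1 h2]

lemma sswap (a b : V) : s(a, b) = s(b, a) := Sym2.eq_swap

end Stmt15Aux

namespace Stmt15Aux

variable {V : Type} [DecidableEq V]

lemma upd1_support {π : Sym2 V → Option (Fin 8)} {e0 : Sym2 V} {t : Fin 8}
    (h0 : π e0 ≠ none) : ∀ e, upd1 π e0 t e ≠ none ↔ π e ≠ none := by
  intro e
  by_cases h : e = e0
  · subst h; rw [upd1_apply_same]; simp [h0]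
  · rw [upd1_apply_other _ _ h]

end Stmt15Aux

namespace Stmt15Aux

open SimpleGraph

variable {V : Type} [DecidableEq V]

set_option maxHeartbeats 1000000 in
/-- Case B-i of the butterfly argument: `π(xz) = β`, `π(zu) = a`. -/
lemma subBI {G : SimpleGraph V} {π : Sym2 V → Option (Fin 8)} (hp : IsProperPEC G 8 π)
    {x y z w w' u u' : V} {a β c d g : Fin 8}
    (hxy : G.Adj x y) (hxz : G.Adj x z) (hyw : G.Adj y w) (hyw' : G.Adj y w')
    (hzu : G.Adj z u) (hzu' : G.Adj z u') (hxw : G.Adj x w) (hxu : G.Adj x u)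
    (hxu' : G.Adj x u')
    (hyz : y ≠ z) (hzw : z ≠ w) (hyu : y ≠ u) (hyu' : y ≠ u') (huu' : u ≠ u')
    (hww' : w ≠ w')
    (hNy : ∀ v, G.Adj y v → v = x ∨ v = w ∨ v = w')
    (hNz : ∀ v, G.Adj z v → v = x ∨ v = u ∨ v = u')
    (huncol : π s(x, y) = none)
    (hfa : freeAt π x a)
    (hyw_a : π s(y, w) = some a) (hyw'_β : π s(y, w') = some β)
    (hxz_β : π s(x, z) = some β) (hzu_a : π s(z, u) = some a)
    (hzu'_c : π s(z, u') = some c) (hxu_d : π s(x, u) = some d)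
    (hxu'_col : π s(x, u') ≠ none) (hxw_g : π s(x, w) = some g) :
    Extends G π s(x, y) := by
  -- basic distinctness
  have hxny : x ≠ y := hxy.ne
  have hxnz : x ≠ z := hxz.ne
  have hxnw : x ≠ w := hxw.ne
  have hxnu : x ≠ u := hxu.ne
  have hxnu' : x ≠ u' := hxu'.ne
  have hynw : y ≠ w := hyw.ne
  have hynw' : y ≠ w' := hyw'.ne
  have hznu : z ≠ u := hzu.ne
  have hznu' : z ≠ u' := hzu'.ne
  -- color distinctness
  have haβ : a ≠ β :=
    colors_ne hp (sym2_ne_of_ne (Or.inr hww') (Or.inl hynw')) (Sym2.mem_mk_left y w)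
      (Sym2.mem_mk_left y w') hyw_a hyw'_β
  have hca : c ≠ a :=
    colors_ne hp (sym2_ne_of_ne (Or.inr (Ne.symm huu')) (Or.inl hznu))
      (Sym2.mem_mk_left z u') (Sym2.mem_mk_left z u) hzu'_c hzu_a
  have hcβ : c ≠ β :=
    colors_ne hp (sym2_ne_of_ne (Or.inl (Ne.symm hxnz)) (Or.inr (Ne.symm hxnu')))
      (Sym2.mem_mk_left z u') (Sym2.mem_mk_right x z) hzu'_c hxz_β
  have hda : d ≠ a := fun hh => hfa s(x, u) (Sym2.mem_mk_left x u) (hh ▸ hxu_d)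
  have hdβ : d ≠ β :=
    colors_ne hp (sym2_ne_of_ne (Or.inr (Ne.symm hznu)) (Or.inl hxnz))
      (Sym2.mem_mk_left x u) (Sym2.mem_mk_left x z) hxu_d hxz_β
  have hga : g ≠ a := fun hh => hfa s(x, w) (Sym2.mem_mk_left x w) (hh ▸ hxw_g)
  have hgβ : g ≠ β :=
    colors_ne hp (sym2_ne_of_ne (Or.inr (Ne.symm hzw)) (Or.inl hxnz))
      (Sym2.mem_mk_left x w) (Sym2.mem_mk_left x z) hxw_g hxz_β
  have hwu : w ≠ u := by
    intro hh
    exact colors_ne hp (sym2_ne_of_ne (Or.inl hyz) (Or.inl hyu))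
      (Sym2.mem_mk_right y w) (show w ∈ s(z, u) by rw [hh]; exact Sym2.mem_mk_right z u)
      hyw_a hzu_a rfl
  have freeY : ∀ t : Fin 8, t ≠ a → t ≠ β → freeAt π y t := by
    intro t h1 h2
    refine free_of_nbrs hp hNy ?_ ?_ ?_
    · rw [sswap y x, huncol]; simp
    · rw [hyw_a]; simp [Ne.symm h1]
    · rw [hyw'_β]; simp [Ne.symm h2]
  by_cases hdc : d = c
  · -- the stuck case d = c : rotate at w first
    have hxu_c : π s(x, u) = some c := by rw [hxu_d, hdc]
    have hgc : g ≠ c :=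
      colors_ne hp (sym2_ne_of_ne (Or.inr hwu) (Or.inl hxnu))
        (Sym2.mem_mk_left x w) (Sym2.mem_mk_left x u) hxw_g hxu_c
    have hea_ne_eb : s(x, w) ≠ s(y, w) := sym2_ne_of_ne (Or.inl hxny) (Or.inl hxnw)
    have hp3 : IsProperPEC G 8 (upd2 π s(x, w) s(y, w) a g) := by
      refine upd2_proper hp hea_ne_eb (G.mem_edgeSet.mpr hxw) (G.mem_edgeSet.mpr hyw)
        ?_ ?_ (Ne.symm hga)
      · intro v hv e hve hne1 hne2
        rcases Sym2.mem_iff.mp hv with rfl | rfl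
        · exact hfa e hve
        · exact free_of_unique hp hyw_a (Sym2.mem_mk_right y v) e hve hne2
      · intro v hv e hve hne1 hne2
        rcases Sym2.mem_iff.mp hv with rfl | rfl
        · exact freeY g hga hgβ e hve
        · exact free_of_unique hp hxw_g (Sym2.mem_mk_right x v) e hve hne1
    -- edge inequalities
    have n1 : s(y, w') ≠ s(x, w) := sym2_ne_of_ne (Or.inl (Ne.symm hxny)) (Or.inl hynw)
    have n2 : s(y, w') ≠ s(y, w) := sym2_ne_of_ne (Or.inr (Ne.symm hww')) (Or.inl hynw)
    have n3 : s(x, z) ≠ s(x, w) := sym2_ne_of_ne (Or.inr hzw) (Or.inl hxnw)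
    have n4 : s(x, z) ≠ s(y, w) := sym2_ne_of_ne (Or.inl hxny) (Or.inl hxnw)
    have n5 : s(z, u) ≠ s(x, w) := sym2_ne_of_ne (Or.inl (Ne.symm hxnz)) (Or.inl hzw)
    have n6 : s(z, u) ≠ s(y, w) := sym2_ne_of_ne (Or.inl (Ne.symm hyz)) (Or.inl hzw)
    have n7 : s(z, u') ≠ s(x, w) := sym2_ne_of_ne (Or.inl (Ne.symm hxnz)) (Or.inl hzw)
    have n8 : s(z, u') ≠ s(y, w) := sym2_ne_of_ne (Or.inl (Ne.symm hyz)) (Or.inl hzw)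
    have n11 : s(x, y) ≠ s(x, w) := sym2_ne_of_ne (Or.inr hynw) (Or.inl hxnw)
    have n12 : s(x, y) ≠ s(y, w) := sym2_ne_of_ne (Or.inl hxny) (Or.inl hxnw)
    -- values of π3
    have v_xw : upd2 π s(x, w) s(y, w) a g s(x, w) = some a := upd2_apply_a π _ _ a g
    have v_yw : upd2 π s(x, w) s(y, w) a g s(y, w) = some g :=
      upd2_apply_b π a g (Ne.symm hea_ne_eb)
    have v_yw' : upd2 π s(x, w) s(y, w) a g s(y, w') = some β :=
      (upd2_apply_other π a g n1 n2).trans hyw'_β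
    have v_xz : upd2 π s(x, w) s(y, w) a g s(x, z) = some β :=
      (upd2_apply_other π a g n3 n4).trans hxz_β
    have v_zu : upd2 π s(x, w) s(y, w) a g s(z, u) = some a :=
      (upd2_apply_other π a g n5 n6).trans hzu_a
    have v_zu' : upd2 π s(x, w) s(y, w) a g s(z, u') = some c :=
      (upd2_apply_other π a g n7 n8).trans hzu'_c
    have v_xy : upd2 π s(x, w) s(y, w) a g s(x, y) = none :=
      (upd2_apply_other π a g n11 n12).trans huncol
    have hf3x : freeAt (upd2 π s(x, w) s(y, w) a g) x g := by
      intro e hx heq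
      by_cases h1 : e = s(x, w)
      · rw [h1, upd2_apply_a] at heq
        exact hga (Option.some.inj heq).symm
      by_cases h2 : e = s(y, w)
      · subst h2
        rcases Sym2.mem_iff.mp hx with rfl | rfl
        · exact hxny rfl
        · exact hxnw rfl
      · rw [upd2_apply_other _ _ _ h1 h2] at heq
        exact free_of_unique hp hxw_g (Sym2.mem_mk_left x w) e hx h1 heq
    have freeY3 : ∀ t : Fin 8, t ≠ g → t ≠ β → freeAt (upd2 π s(x, w) s(y, w) a g) y t := by
      intro t h1 h2
      refine free_of_nbrs hp3 hNy ?_ ?_ ?_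
      · rw [sswap y x, v_xy]; simp
      · rw [v_yw]; simp [Ne.symm h1]
      · rw [v_yw']; simp [Ne.symm h2]
    have hzf3g : freeAt (upd2 π s(x, w) s(y, w) a g) z g := by
      refine free_of_nbrs hp3 hNz ?_ ?_ ?_
      · rw [sswap z x, v_xz]; simp [Ne.symm hgβ]
      · rw [v_zu]; simp [Ne.symm hga]
      · rw [v_zu']; simp [Ne.symm hgc]
    have supports3 : ∀ e, upd2 π s(x, w) s(y, w) a g e ≠ none ↔ π e ≠ none :=
      upd2_support (by simp [hxw_g]) (by simp [hyw_a])
    by_cases hR : chainReach (upd2 π s(x, w) s(y, w) a g) g c x y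
    · by_cases hwu' : u' = w
      · -- shared-vertex subcase : three endpoints on one chain, contradiction
        have v_zw : upd2 π s(x, w) s(y, w) a g s(z, w) = some c := by
          have hv := v_zu'
          rw [hwu'] at hv
          exact hv
        have hAdj_zw : (chainGraph (upd2 π s(x, w) s(y, w) a g) g c).Adj z w :=
          (SimpleGraph.fromEdgeSet_adj _).mpr ⟨Or.inr v_zw, hzw⟩
        have hAdj_yw : (chainGraph (upd2 π s(x, w) s(y, w) a g) g c).Adj y w :=
          (SimpleGraph.fromEdgeSet_adj _).mpr ⟨Or.inl v_yw, hynw⟩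
        have hrxz : chainReach (upd2 π s(x, w) s(y, w) a g) g c x z :=
          hR.trans (hAdj_yw.reachable.trans hAdj_zw.symm.reachable)
        exact (chain_three hp3 (Or.inl hf3x) (Or.inr (freeY3 c (Ne.symm hgc) hcβ))
          (Or.inl hzf3g) hxny hxnz hyz hR hrxz).elim
      · by_cases hRz : chainReach (upd2 π s(x, w) s(y, w) a g) g c x z
        · exact (chain_three hp3 (Or.inl hf3x) (Or.inr (freeY3 c (Ne.symm hgc) hcβ))
            (Or.inl hzf3g) hxny hxnz hyz hR hRz).elim
        · -- swap the (g,c)-component of z, then rotate at u'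
          obtain ⟨d', hd'⟩ := Option.ne_none_iff_exists'.mp hxu'_col
          have hd'a : d' ≠ a := fun hh => hfa s(x, u') (Sym2.mem_mk_left x u') (hh ▸ hd')
          have hd'β : d' ≠ β :=
            colors_ne hp (sym2_ne_of_ne (Or.inr (Ne.symm hznu')) (Or.inl hxnz))
              (Sym2.mem_mk_left x u') (Sym2.mem_mk_left x z) hd' hxz_β
          have hd'c : d' ≠ c :=
            colors_ne hp (sym2_ne_of_ne (Or.inr (Ne.symm huu')) (Or.inl hxnu))
              (Sym2.mem_mk_left x u') (Sym2.mem_mk_left x u) hd' hxu_c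
          have hd'g : d' ≠ g :=
            colors_ne hp (sym2_ne_of_ne (Or.inr hwu') (Or.inl hxnw))
              (Sym2.mem_mk_left x u') (Sym2.mem_mk_left x w) hd' hxw_g
          have hnrzx : ¬ chainReach (upd2 π s(x, w) s(y, w) a g) g c z x := fun h => hRz h.symm
          have hnrzy : ¬ chainReach (upd2 π s(x, w) s(y, w) a g) g c z y := fun h =>
            hRz (hR.trans h.symm)
          have n13 : s(x, u') ≠ s(x, w) := sym2_ne_of_ne (Or.inr hwu') (Or.inl hxnw)
          have n14 : s(x, u') ≠ s(y, w) := sym2_ne_of_ne (Or.inl hxny) (Or.inl hxnw)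
          have hp4 : IsProperPEC G 8 (swapcc (upd2 π s(x, w) s(y, w) a g) g c z) :=
            swapcc_proper hp3 hgc
          have w_xu' : swapcc (upd2 π s(x, w) s(y, w) a g) g c z s(x, u') = some d' := by
            rw [swapcc_eq_of_not_reach hp3 (Sym2.mem_mk_left x u') hnrzx,
              upd2_apply_other _ _ _ n13 n14]
            exact hd'
          have w_zu' : swapcc (upd2 π s(x, w) s(y, w) a g) g c z s(z, u') = some g :=
            swapcc_eq_c hgc (Sym2.mem_mk_left z u') (Reachable.refl z) v_zu'
          have w_zu : swapcc (upd2 π s(x, w) s(y, w) a g) g c z s(z, u) = some a := by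
            rw [swapcc_eq_of_not_chain (by rw [v_zu]; simp [Ne.symm hga])
              (by rw [v_zu]; simp [Ne.symm hca])]
            exact v_zu
          have hfx4g : freeAt (swapcc (upd2 π s(x, w) s(y, w) a g) g c z) x g :=
            swapcc_free_far hp3 hnrzx hf3x
          have hfz4d' : freeAt (swapcc (upd2 π s(x, w) s(y, w) a g) g c z) z d' := by
            refine free_of_nbrs hp4 hNz ?_ ?_ ?_
            · rw [swapcc_eq_of_not_reach hp3 (Sym2.mem_mk_right z x) hnrzx, sswap z x, v_xz]
              simp [Ne.symm hd'β]
            · rw [w_zu]; simp [Ne.symm hd'a]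
            · rw [w_zu']; simp [Ne.symm hd'g]
          have hne5 : s(x, u') ≠ s(z, u') := sym2_ne_of_ne (Or.inl hxnz) (Or.inl hxnu')
          have hp5 : IsProperPEC G 8 (upd2 (swapcc (upd2 π s(x, w) s(y, w) a g) g c z)
              s(x, u') s(z, u') g d') := by
            refine upd2_proper hp4 hne5 (G.mem_edgeSet.mpr hxu') (G.mem_edgeSet.mpr hzu')
              ?_ ?_ (Ne.symm hd'g)
            · intro v hv e hve hne1 hne2
              rcases Sym2.mem_iff.mp hv with rfl | rfl
              · exact hfx4g e hve
              · exact free_of_unique hp4 w_zu' (Sym2.mem_mk_right z v) e hve hne2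
            · intro v hv e hve hne1 hne2
              rcases Sym2.mem_iff.mp hv with rfl | rfl
              · exact hfz4d' e hve
              · exact free_of_unique hp4 w_xu' (Sym2.mem_mk_right x v) e hve hne1
          have nxy_a : s(x, y) ≠ s(x, u') := sym2_ne_of_ne (Or.inr hyu') (Or.inl hxnu')
          have nxy_b : s(x, y) ≠ s(z, u') := sym2_ne_of_ne (Or.inl hxnz) (Or.inl hxnu')
          have hun5 : upd2 (swapcc (upd2 π s(x, w) s(y, w) a g) g c z)
              s(x, u') s(z, u') g d' s(x, y) = none := by
            rw [upd2_apply_other _ _ _ nxy_a nxy_b,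
              swapcc_eq_of_not_reach hp3 (Sym2.mem_mk_left x y) hnrzx, v_xy]
          have hfx5 : freeAt (upd2 (swapcc (upd2 π s(x, w) s(y, w) a g) g c z)
              s(x, u') s(z, u') g d') x d' := by
            intro e hx heq
            by_cases h1 : e = s(x, u')
            · rw [h1, upd2_apply_a] at heq
              exact hd'g (Option.some.inj heq).symm
            by_cases h2 : e = s(z, u')
            · subst h2
              rcases Sym2.mem_iff.mp hx with rfl | rfl
              · exact hxnz rfl
              · exact hxnu' rfl
            · rw [upd2_apply_other _ _ _ h1 h2] at heq
              exact free_of_unique hp4 w_xu' (Sym2.mem_mk_left x u') e hx h1 heq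
          have hfy5 : freeAt (upd2 (swapcc (upd2 π s(x, w) s(y, w) a g) g c z)
              s(x, u') s(z, u') g d') y d' := by
            intro e hy heq
            by_cases h1 : e = s(x, u')
            · subst h1
              rcases Sym2.mem_iff.mp hy with rfl | rfl
              · exact hxny rfl
              · exact hyu' rfl
            by_cases h2 : e = s(z, u')
            · subst h2
              rcases Sym2.mem_iff.mp hy with rfl | rfl
              · exact hyz rfl
              · exact hyu' rfl
            · rw [upd2_apply_other _ _ _ h1 h2,
                swapcc_eq_of_not_reach hp3 hy hnrzy] at heq
              exact freeY3 d' hd'g hd'β e hy heq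
          refine Extends.of_supportEq supports3 (Extends.of_supportEq
            (fun e => swapcc_support (upd2 π s(x, w) s(y, w) a g) g c z e)
            (Extends.of_supportEq (upd2_support (by simp [w_xu']) (by simp [w_zu']))
              (extends_of_free hp5 hxy hun5 hfx5 hfy5)))
    · exact Extends.of_supportEq supports3
        (extends_of_unreach hp3 hxy v_xy hf3x (freeY3 c (Ne.symm hgc) hcβ) hgc hR)
  · -- rotate at u, then color xy with d
    have hzfd : freeAt π z d := by
      refine free_of_nbrs hp hNz ?_ ?_ ?_
      · rw [sswap z x, hxz_β]; simp [Ne.symm hdβ]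
      · rw [hzu_a]; simp [Ne.symm hda]
      · rw [hzu'_c]
        exact fun hh => hdc (Option.some.inj hh).symm
    have hea_ne_eb : s(x, u) ≠ s(z, u) := sym2_ne_of_ne (Or.inl hxnz) (Or.inl hxnu)
    have hp' : IsProperPEC G 8 (upd2 π s(x, u) s(z, u) a d) := by
      refine upd2_proper hp hea_ne_eb (G.mem_edgeSet.mpr hxu) (G.mem_edgeSet.mpr hzu)
        ?_ ?_ (Ne.symm hda)
      · intro v hv e hve hne1 hne2
        rcases Sym2.mem_iff.mp hv with rfl | rfl
        · exact hfa e hve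
        · exact free_of_unique hp hzu_a (Sym2.mem_mk_right z v) e hve hne2
      · intro v hv e hve hne1 hne2
        rcases Sym2.mem_iff.mp hv with rfl | rfl
        · exact hzfd e hve
        · exact free_of_unique hp hxu_d (Sym2.mem_mk_right x v) e hve hne1
    have hxy_ne_ea : s(x, y) ≠ s(x, u) := sym2_ne_of_ne (Or.inr hyu) (Or.inl hxnu)
    have hxy_ne_eb : s(x, y) ≠ s(z, u) := sym2_ne_of_ne (Or.inl hxnz) (Or.inl hxnu)
    have hun' : upd2 π s(x, u) s(z, u) a d s(x, y) = none := by
      rw [upd2_apply_other _ _ _ hxy_ne_ea hxy_ne_eb]; exact huncol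
    have hfx : freeAt (upd2 π s(x, u) s(z, u) a d) x d := by
      intro e hxe heq
      by_cases h1 : e = s(x, u)
      · rw [h1, upd2_apply_a] at heq
        exact hda (Option.some.inj heq).symm
      by_cases h2 : e = s(z, u)
      · subst h2
        rcases Sym2.mem_iff.mp hxe with rfl | rfl
        · exact hxnz rfl
        · exact hxnu rfl
      · rw [upd2_apply_other _ _ _ h1 h2] at heq
        exact free_of_unique hp hxu_d (Sym2.mem_mk_left x u) e hxe h1 heq
    have hfy : freeAt (upd2 π s(x, u) s(z, u) a d) y d := by
      intro e hye heq
      by_cases h1 : e = s(x, u)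
      · subst h1
        rcases Sym2.mem_iff.mp hye with rfl | rfl
        · exact hxny rfl
        · exact hyu rfl
      by_cases h2 : e = s(z, u)
      · subst h2
        rcases Sym2.mem_iff.mp hye with rfl | rfl
        · exact hyz rfl
        · exact hyu rfl
      · rw [upd2_apply_other _ _ _ h1 h2] at heq
        exact freeY d hda hdβ e hye heq
    exact Extends.of_supportEq
      (upd2_support (by simp [hxu_d]) (by simp [hzu_a]))
      (extends_of_free hp' hxy hun' hfx hfy)

end Stmt15Aux

namespace Stmt15Aux

open SimpleGraph

variable {V : Type} [DecidableEq V]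

set_option maxHeartbeats 1000000 in
/-- Case A2 of the butterfly argument: `π(xz) = c₁ ∉ {a, β}` and `π(zu) = a`. -/
lemma subA2 {G : SimpleGraph V} {π : Sym2 V → Option (Fin 8)} (hp : IsProperPEC G 8 π)
    {x y z w w' u u' : V} {a β c c1 : Fin 8}
    (hxy : G.Adj x y) (hxz : G.Adj x z) (hzu : G.Adj z u) (hzu' : G.Adj z u')
    (hyz : y ≠ z) (huu' : u ≠ u') (hxnu' : x ≠ u')
    (hNy : ∀ v, G.Adj y v → v = x ∨ v = w ∨ v = w')
    (hNz : ∀ v, G.Adj z v → v = x ∨ v = u ∨ v = u')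
    (huncol : π s(x, y) = none)
    (hfa : freeAt π x a)
    (hyw_a : π s(y, w) = some a) (hyw'_β : π s(y, w') = some β)
    (hxz_c1 : π s(x, z) = some c1) (hc1β : c1 ≠ β)
    (hzu_a : π s(z, u) = some a) (hzu'_c : π s(z, u') = some c) :
    Extends G π s(x, y) := by
  have hxny : x ≠ y := hxy.ne
  have hxnz : x ≠ z := hxz.ne
  have hznu : z ≠ u := hzu.ne
  have hznu' : z ≠ u' := hzu'.ne
  have hc1a : c1 ≠ a := fun hh => hfa s(x, z) (Sym2.mem_mk_left x z) (hh ▸ hxz_c1)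
  have hca : c ≠ a :=
    colors_ne hp (sym2_ne_of_ne (Or.inr (Ne.symm huu')) (Or.inl hznu))
      (Sym2.mem_mk_left z u') (Sym2.mem_mk_left z u) hzu'_c hzu_a
  have hcc1 : c ≠ c1 :=
    colors_ne hp (sym2_ne_of_ne (Or.inl (Ne.symm hxnz)) (Or.inr (Ne.symm hxnu')))
      (Sym2.mem_mk_left z u') (Sym2.mem_mk_right x z) hzu'_c hxz_c1
  have freeY : ∀ t : Fin 8, t ≠ a → t ≠ β → freeAt π y t := by
    intro t h1 h2
    refine free_of_nbrs hp hNy ?_ ?_ ?_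
    · rw [sswap y x, huncol]; simp
    · rw [hyw_a]; simp [Ne.symm h1]
    · rw [hyw'_β]; simp [Ne.symm h2]
  -- choose a color t outside {a, β, c, c1}
  obtain ⟨t, hta, htβ, htc, htc1⟩ :
      ∃ t : Fin 8, t ≠ a ∧ t ≠ β ∧ t ≠ c ∧ t ≠ c1 := by
    by_contra h
    push_neg at h
    have hsub : (Finset.univ : Finset (Fin 8)) ⊆ ({a, β, c, c1} : Finset (Fin 8)) := by
      intro t _
      rcases Decidable.em (t = a) with h1 | h1
      · simp [h1]
      rcases Decidable.em (t = β) with h2 | h2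
      · simp [h2]
      rcases Decidable.em (t = c) with h3 | h3
      · simp [h3]
      · simp [h t h1 h2 h3]
    have hle := Finset.card_le_card hsub
    rw [Finset.card_univ, Fintype.card_fin] at hle
    have : ({a, β, c, c1} : Finset (Fin 8)).card ≤ 4 := by
      apply le_trans (Finset.card_insert_le _ _)
      have : ({β, c, c1} : Finset (Fin 8)).card ≤ 3 := by
        apply le_trans (Finset.card_insert_le _ _)
        have : ({c, c1} : Finset (Fin 8)).card ≤ 2 := by
          apply le_trans (Finset.card_insert_le _ _)
          simp
        omega
      omega
    omega
  have hzft : freeAt π z t := by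
    refine free_of_nbrs hp hNz ?_ ?_ ?_
    · rw [sswap z x, hxz_c1]; simp [Ne.symm htc1]
    · rw [hzu_a]; simp [Ne.symm hta]
    · rw [hzu'_c]; simp [Ne.symm htc]
  have hat : a ≠ t := Ne.symm hta
  by_cases hR : chainReach π a t x y
  · by_cases hRz : chainReach π a t x z
    · exact (chain_three hp (Or.inl hfa) (Or.inr (freeY t hta htβ)) (Or.inr hzft)
        hxny hxnz hyz hR hRz).elim
    · -- swap the (a,t)-component of z, recolor xz to a, color xy with c1
      have hnrzx : ¬ chainReach π a t z x := fun h => hRz h.symm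
      have hnrzy : ¬ chainReach π a t z y := fun h => hRz (hR.trans h.symm)
      have hp4 : IsProperPEC G 8 (swapcc π a t z) := swapcc_proper hp hat
      have w_zu : swapcc π a t z s(z, u) = some t :=
        swapcc_eq_g hat (Sym2.mem_mk_left z u) (Reachable.refl z) hzu_a
      have w_zu' : swapcc π a t z s(z, u') = some c := by
        rw [swapcc_eq_of_not_chain (by rw [hzu'_c]; simp [hca])
          (by rw [hzu'_c]; simp [Ne.symm htc])]
        exact hzu'_c
      have w_xz : swapcc π a t z s(x, z) = some c1 := by
        rw [swapcc_eq_of_not_reach hp (Sym2.mem_mk_left x z) hnrzx]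
        exact hxz_c1
      have hfz4a : freeAt (swapcc π a t z) z a := by
        refine free_of_nbrs hp4 hNz ?_ ?_ ?_
        · rw [sswap z x, w_xz]; simp [hc1a]
        · rw [w_zu]; simp [hta]
        · rw [w_zu']; simp [hca]
      have hfx4a : freeAt (swapcc π a t z) x a := swapcc_free_far hp hnrzx hfa
      have hp5 : IsProperPEC G 8 (upd1 (swapcc π a t z) s(x, z) a) := by
        refine upd1_proper hp4 (G.mem_edgeSet.mpr hxz) ?_
        intro v hv
        rcases Sym2.mem_iff.mp hv with rfl | rfl
        · exact hfx4a
        · exact hfz4a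
      have nxy : s(x, y) ≠ s(x, z) := sym2_ne_of_ne (Or.inr hyz) (Or.inl hxnz)
      have hun5 : upd1 (swapcc π a t z) s(x, z) a s(x, y) = none := by
        rw [upd1_apply_other _ _ nxy,
          swapcc_eq_of_not_reach hp (Sym2.mem_mk_left x y) hnrzx]
        exact huncol
      have hfx5 : freeAt (upd1 (swapcc π a t z) s(x, z) a) x c1 := by
        intro e hx heq
        by_cases h1 : e = s(x, z)
        · rw [h1, upd1_apply_same] at heq
          exact hc1a (Option.some.inj heq).symm
        · rw [upd1_apply_other _ _ h1] at heq
          exact free_of_unique hp4 w_xz (Sym2.mem_mk_left x z) e hx h1 heq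
      have hfy5 : freeAt (upd1 (swapcc π a t z) s(x, z) a) y c1 := by
        intro e hy heq
        by_cases h1 : e = s(x, z)
        · subst h1
          rcases Sym2.mem_iff.mp hy with rfl | rfl
          · exact hxny rfl
          · exact hyz rfl
        · rw [upd1_apply_other _ _ h1,
            swapcc_eq_of_not_reach hp hy hnrzy] at heq
          exact freeY c1 hc1a hc1β e hy heq
      exact Extends.of_supportEq (fun e => swapcc_support π a t z e)
        (Extends.of_supportEq (upd1_support (by simp [w_xz]))
          (extends_of_free hp5 hxy hun5 hfx5 hfy5))
  · exact extends_of_unreach hp hxy huncol hfa (freeY t hta htβ) hat hR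

end Stmt15Aux

namespace Stmt15Aux

open SimpleGraph

variable {V : Type} [DecidableEq V]

set_option maxHeartbeats 1000000 in
/-- The butterfly argument after normalising which `y`-edge carries the color `a`
missing at `x`. -/
lemma subMain {G : SimpleGraph V} {π : Sym2 V → Option (Fin 8)} (hp : IsProperPEC G 8 π)
    {x y z w w' u1 u2 : V} {a β c1 d1 d2 g c2 c3 : Fin 8}
    (hxy : G.Adj x y) (hxz : G.Adj x z) (hyw : G.Adj y w) (hyw' : G.Adj y w')
    (hzu1 : G.Adj z u1) (hzu2 : G.Adj z u2) (hxw : G.Adj x w)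
    (hxu1 : G.Adj x u1) (hxu2 : G.Adj x u2)
    (hyz : y ≠ z) (hzw : z ≠ w) (hyu1 : y ≠ u1) (hyu2 : y ≠ u2) (hu12 : u1 ≠ u2)
    (hww' : w ≠ w')
    (hNy : ∀ v, G.Adj y v → v = x ∨ v = w ∨ v = w')
    (hNz : ∀ v, G.Adj z v → v = x ∨ v = u1 ∨ v = u2)
    (huncol : π s(x, y) = none)
    (hfa : freeAt π x a)
    (hyw_a : π s(y, w) = some a) (hyw'_β : π s(y, w') = some β)
    (hxz_c1 : π s(x, z) = some c1) (hxu1_d1 : π s(x, u1) = some d1)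
    (hxu2_d2 : π s(x, u2) = some d2) (hxw_g : π s(x, w) = some g)
    (hzu1_c2 : π s(z, u1) = some c2) (hzu2_c3 : π s(z, u2) = some c3) :
    Extends G π s(x, y) := by
  have hxny : x ≠ y := hxy.ne
  have hxnz : x ≠ z := hxz.ne
  have hxnu1 : x ≠ u1 := hxu1.ne
  have hxnu2 : x ≠ u2 := hxu2.ne
  have hznu1 : z ≠ u1 := hzu1.ne
  have hznu2 : z ≠ u2 := hzu2.ne
  have hNz' : ∀ v, G.Adj z v → v = x ∨ v = u2 ∨ v = u1 := fun v hv => by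
    rcases hNz v hv with h | h | h <;> tauto
  have freeY : ∀ t : Fin 8, t ≠ a → t ≠ β → freeAt π y t := by
    intro t ht1 ht2
    refine free_of_nbrs hp hNy ?_ ?_ ?_
    · rw [sswap y x, huncol]; simp
    · rw [hyw_a]; simp [Ne.symm ht1]
    · rw [hyw'_β]; simp [Ne.symm ht2]
  by_cases hc1β : c1 = β
  · -- Case B : the x-z edge carries the second color of y
    have hxz_β : π s(x, z) = some β := by rw [hxz_c1, hc1β]
    by_cases h1 : c2 = a
    · exact subBI hp hxy hxz hyw hyw' hzu1 hzu2 hxw hxu1 hxu2 hyz hzw hyu1 hyu2 hu12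
        hww' hNy hNz huncol hfa hyw_a hyw'_β hxz_β (by rw [hzu1_c2, h1]) hzu2_c3
        hxu1_d1 (by simp [hxu2_d2]) hxw_g
    by_cases h2 : c3 = a
    · exact subBI hp hxy hxz hyw hyw' hzu2 hzu1 hxw hxu2 hxu1 hyz hzw hyu2 hyu1
        (Ne.symm hu12) hww' hNy hNz' huncol hfa hyw_a hyw'_β hxz_β (by rw [hzu2_c3, h2])
        hzu1_c2 hxu2_d2 (by simp [hxu1_d1]) hxw_g
    · -- Case B-ii : make an `a`-edge appear at `z` by a chain swap
      have haβ : a ≠ β := fun hh => hfa s(x, z) (Sym2.mem_mk_left x z) (hh ▸ hxz_β)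
      have hsβ : c2 ≠ β :=
        colors_ne hp (sym2_ne_of_ne (Or.inl (Ne.symm hxnz)) (Or.inr (Ne.symm hxnu1)))
          (Sym2.mem_mk_left z u1) (Sym2.mem_mk_right x z) hzu1_c2 hxz_β
      have hc3c2 : c3 ≠ c2 :=
        colors_ne hp (sym2_ne_of_ne (Or.inr (Ne.symm hu12)) (Or.inl hznu1))
          (Sym2.mem_mk_left z u2) (Sym2.mem_mk_left z u1) hzu2_c3 hzu1_c2
      have hzfa : freeAt π z a := by
        refine free_of_nbrs hp hNz ?_ ?_ ?_
        · rw [sswap z x, hxz_β]; simp [Ne.symm haβ]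
        · rw [hzu1_c2]; simp [h1]
        · rw [hzu2_c3]; simp [h2]
      by_cases hR : chainReach π a c2 x y
      · by_cases hRz : chainReach π a c2 x z
        · exact (chain_three hp (Or.inl hfa) (Or.inr (freeY c2 h1 hsβ)) (Or.inl hzfa)
            hxny hxnz hyz hR hRz).elim
        · have hnrzx : ¬ chainReach π a c2 z x := fun h => hRz h.symm
          have hnrzy : ¬ chainReach π a c2 z y := fun h => hRz (hR.trans h.symm)
          have hac2 : a ≠ c2 := Ne.symm h1
          have hp1 : IsProperPEC G 8 (swapcc π a c2 z) := swapcc_proper hp hac2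
          have w_zu1 : swapcc π a c2 z s(z, u1) = some a :=
            swapcc_eq_c hac2 (Sym2.mem_mk_left z u1) (Reachable.refl z) hzu1_c2
          have w_zu2 : swapcc π a c2 z s(z, u2) = some c3 := by
            rw [swapcc_eq_of_not_chain (by rw [hzu2_c3]; simp [h2])
              (by rw [hzu2_c3]; simp [hc3c2])]
            exact hzu2_c3
          have w_xz : swapcc π a c2 z s(x, z) = some β := by
            rw [swapcc_eq_of_not_reach hp (Sym2.mem_mk_left x z) hnrzx]; exact hxz_β
          have w_xu1 : swapcc π a c2 z s(x, u1) = some d1 := by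
            rw [swapcc_eq_of_not_reach hp (Sym2.mem_mk_left x u1) hnrzx]; exact hxu1_d1
          have w_xu2 : swapcc π a c2 z s(x, u2) = some d2 := by
            rw [swapcc_eq_of_not_reach hp (Sym2.mem_mk_left x u2) hnrzx]; exact hxu2_d2
          have w_xw : swapcc π a c2 z s(x, w) = some g := by
            rw [swapcc_eq_of_not_reach hp (Sym2.mem_mk_left x w) hnrzx]; exact hxw_g
          have w_xy : swapcc π a c2 z s(x, y) = none := by
            rw [swapcc_eq_of_not_reach hp (Sym2.mem_mk_left x y) hnrzx]; exact huncol
          have w_yw : swapcc π a c2 z s(y, w) = some a := by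
            rw [swapcc_eq_of_not_reach hp (Sym2.mem_mk_left y w) hnrzy]; exact hyw_a
          have w_yw' : swapcc π a c2 z s(y, w') = some β := by
            rw [swapcc_eq_of_not_reach hp (Sym2.mem_mk_left y w') hnrzy]; exact hyw'_β
          exact Extends.of_supportEq (fun e => swapcc_support π a c2 z e)
            (subBI hp1 hxy hxz hyw hyw' hzu1 hzu2 hxw hxu1 hxu2 hyz hzw hyu1 hyu2 hu12
              hww' hNy hNz w_xy (swapcc_free_far hp hnrzx hfa) w_yw w_yw' w_xz w_zu1
              w_zu2 w_xu1 (by simp [w_xu2]) w_xw)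
      · exact extends_of_unreach hp hxy huncol hfa (freeY c2 h1 hsβ) (Ne.symm h1) hR
  · -- Case A : `π(xz) ∉ {a, β}`
    by_cases h1 : c2 = a
    · exact subA2 hp hxy hxz hzu1 hzu2 hyz hu12 hxnu2 hNy hNz huncol hfa hyw_a hyw'_β
        hxz_c1 hc1β (by rw [hzu1_c2, h1]) hzu2_c3
    by_cases h2 : c3 = a
    · exact subA2 hp hxy hxz hzu2 hzu1 hyz (Ne.symm hu12) hxnu1 hNy hNz' huncol hfa
        hyw_a hyw'_β hxz_c1 hc1β (by rw [hzu2_c3, h2]) hzu1_c2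
    · -- Case A1 : recolor xz with a, color xy with c1
      have hc1a : c1 ≠ a := fun hh => hfa s(x, z) (Sym2.mem_mk_left x z) (hh ▸ hxz_c1)
      have hzfa : freeAt π z a := by
        refine free_of_nbrs hp hNz ?_ ?_ ?_
        · rw [sswap z x, hxz_c1]; simp [hc1a]
        · rw [hzu1_c2]; simp [h1]
        · rw [hzu2_c3]; simp [h2]
      have hp1 : IsProperPEC G 8 (upd1 π s(x, z) a) := by
        refine upd1_proper hp (G.mem_edgeSet.mpr hxz) ?_
        intro v hv
        rcases Sym2.mem_iff.mp hv with rfl | rfl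
        · exact hfa
        · exact hzfa
      have nxy : s(x, y) ≠ s(x, z) := sym2_ne_of_ne (Or.inr hyz) (Or.inl hxnz)
      have hun1 : upd1 π s(x, z) a s(x, y) = none := by
        rw [upd1_apply_other _ _ nxy]; exact huncol
      have hfx1 : freeAt (upd1 π s(x, z) a) x c1 := by
        intro e hx heq
        by_cases hh : e = s(x, z)
        · rw [hh, upd1_apply_same] at heq
          exact hc1a (Option.some.inj heq).symm
        · rw [upd1_apply_other _ _ hh] at heq
          exact free_of_unique hp hxz_c1 (Sym2.mem_mk_left x z) e hx hh heq
      have hfy1 : freeAt (upd1 π s(x, z) a) y c1 := by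
        intro e hy heq
        by_cases hh : e = s(x, z)
        · subst hh
          rcases Sym2.mem_iff.mp hy with rfl | rfl
          · exact hxny rfl
          · exact hyz rfl
        · rw [upd1_apply_other _ _ hh] at heq
          exact freeY c1 hc1a hc1β e hy heq
      exact Extends.of_supportEq (upd1_support (by simp [hxz_c1]))
        (extends_of_free hp1 hxy hun1 hfx1 hfy1)

end Stmt15Aux

namespace Stmt15Aux

open SimpleGraph

variable {V : Type}

set_option maxHeartbeats 1000000 in
/-- The butterfly argument, from the raw configuration data. -/
lemma mainButterfly [Fintype V] [DecidableEq V] {G : SimpleGraph V} [DecidableRel G.Adj]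
    {π : Sym2 V → Option (Fin 8)} (hp : IsProperPEC G 8 π)
    {x y z w1 w2 u1 u2 : V}
    (hdegx : G.degree x ≤ 8) (hdegy : G.degree y = 3) (hdegz : G.degree z = 3)
    (hxy : G.Adj x y) (hxz : G.Adj x z) (hyw1 : G.Adj y w1) (hyw2 : G.Adj y w2)
    (hzu1 : G.Adj z u1) (hzu2 : G.Adj z u2) (hxw1 : G.Adj x w1) (hxw2 : G.Adj x w2)
    (hxu1 : G.Adj x u1) (hxu2 : G.Adj x u2)
    (hyz : y ≠ z) (hzw1 : z ≠ w1) (hzw2 : z ≠ w2) (hyu1 : y ≠ u1) (hyu2 : y ≠ u2)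
    (hw12 : w1 ≠ w2) (hu12 : u1 ≠ u2)
    (hcolx : ∀ v, G.Adj x v → v ≠ y → π s(x, v) ≠ none)
    (hcoly : ∀ v, G.Adj y v → v ≠ x → π s(y, v) ≠ none)
    (hcolz : ∀ v, G.Adj z v → π s(z, v) ≠ none)
    (huncol : π s(x, y) = none) : Extends G π s(x, y) := by
  have hNy : ∀ v, G.Adj y v → v = x ∨ v = w1 ∨ v = w2 :=
    nbrs_of_deg3 hdegy hxy.symm hyw1 hyw2 hxw1.ne hxw2.ne hw12
  have hNz : ∀ v, G.Adj z v → v = x ∨ v = u1 ∨ v = u2 :=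
    nbrs_of_deg3 hdegz hxz.symm hzu1 hzu2 hxu1.ne hxu2.ne hu12
  have hNy' : ∀ v, G.Adj y v → v = x ∨ v = w2 ∨ v = w1 := fun v hv => by
    rcases hNy v hv with h | h | h <;> tauto
  obtain ⟨a, hfa⟩ := exists_free hp hdegx hxy huncol
  obtain ⟨β1, hβ1⟩ := Option.ne_none_iff_exists'.mp (hcoly w1 hyw1 (Ne.symm hxw1.ne))
  obtain ⟨β2, hβ2⟩ := Option.ne_none_iff_exists'.mp (hcoly w2 hyw2 (Ne.symm hxw2.ne))
  obtain ⟨c1, hc1⟩ := Option.ne_none_iff_exists'.mp (hcolx z hxz (Ne.symm hyz))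
  obtain ⟨d1, hd1⟩ := Option.ne_none_iff_exists'.mp (hcolx u1 hxu1 (Ne.symm hyu1))
  obtain ⟨d2, hd2⟩ := Option.ne_none_iff_exists'.mp (hcolx u2 hxu2 (Ne.symm hyu2))
  obtain ⟨g1, hg1⟩ := Option.ne_none_iff_exists'.mp (hcolx w1 hxw1 hyw1.ne')
  obtain ⟨g2, hg2⟩ := Option.ne_none_iff_exists'.mp (hcolx w2 hxw2 hyw2.ne')
  obtain ⟨c2, hc2⟩ := Option.ne_none_iff_exists'.mp (hcolz u1 hzu1)
  obtain ⟨c3, hc3⟩ := Option.ne_none_iff_exists'.mp (hcolz u2 hzu2)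
  by_cases hb1 : β1 = a
  · exact subMain hp hxy hxz hyw1 hyw2 hzu1 hzu2 hxw1 hxu1 hxu2 hyz hzw1 hyu1 hyu2
      hu12 hw12 hNy hNz huncol hfa (by rw [hβ1, hb1]) hβ2 hc1 hd1 hd2 hg1 hc2 hc3
  by_cases hb2 : β2 = a
  · exact subMain hp hxy hxz hyw2 hyw1 hzu1 hzu2 hxw2 hxu1 hxu2 hyz hzw2 hyu1 hyu2
      hu12 (Ne.symm hw12) hNy' hNz huncol hfa (by rw [hβ2, hb2]) hβ1 hc1 hd1 hd2 hg2
      hc2 hc3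
  · have hfy : freeAt π y a := by
      refine free_of_nbrs hp hNy ?_ ?_ ?_
      · rw [sswap y x, huncol]; simp
      · rw [hβ1]; simp [hb1]
      · rw [hβ2]; simp [hb2]
    exact extends_of_free hp hxy huncol hfa hfy

end Stmt15Aux

open Stmt15Aux in
/-- A partial 8-edge-coloring can be extended to any uncolored butterfly-like edge all of
whose surrounding edges (at distance at most 1) are colored. -/
theorem stmt15 {V : Type} [Fintype V] [DecidableEq V] (G : SimpleGraph V) [DecidableRel G.Adj]
    (hΔ : G.maxDegree ≤ 8) (π : Sym2 V → Option (Fin 8)) (hπ : IsProperPEC G 8 π)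
    (e : Sym2 V) (hbf : IsButterflyLike G e) (huncol : π e = none)
    (hcol : ∀ e' ∈ G.edgeSet, e' ≠ e → edgeDistLE G 1 e' e → π e' ≠ none) :
    ∃ σ : Sym2 V → Option (Fin 8), IsProperPEC G 8 σ ∧
      ∀ e', (σ e' ≠ none ↔ (π e' ≠ none ∨ e' = e)) := by
  obtain ⟨x, y, rfl, hBA⟩ := hbf
  have hxyAdj : G.Adj x y := by
    rcases hBA with ⟨z, v1, v2, v3, h⟩ | ⟨z, v1, v2, v3, v4, h⟩ <;> exact h.2.1
  have hcolx : ∀ v, G.Adj x v → v ≠ y → π s(x, v) ≠ none := by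
    intro v hv hvy
    exact hcol s(x, v) (G.mem_edgeSet.mpr hv)
      (sym2_ne_of_ne (Or.inr hvy) (Or.inl hxyAdj.ne))
      ⟨x, Sym2.mem_mk_left x v, x, Sym2.mem_mk_left x y, SimpleGraph.Walk.nil, by simp⟩
  have hcoly : ∀ v, G.Adj y v → v ≠ x → π s(y, v) ≠ none := by
    intro v hv hvx
    exact hcol s(y, v) (G.mem_edgeSet.mpr hv)
      (sym2_ne_of_ne (Or.inl hxyAdj.ne') (Or.inr hvx))
      ⟨y, Sym2.mem_mk_left y v, y, Sym2.mem_mk_right x y, SimpleGraph.Walk.nil, by simp⟩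
  have hdegx : G.degree x ≤ 8 := le_trans (G.degree_le_maxDegree x) hΔ
  rcases hBA with ⟨z, v1, v2, v3, hpw, hxy, hxz, hyv1, hyv3, hzv1, hzv2, hxv1, hxv2, hxv3,
      hdy, hdz, hdx, -, -, -⟩ |
    ⟨z, v1, v2, v3, v4, hpw, hxy, hxz, hyv1, hyv4, hzv2, hzv3, hxv1, hxv2, hxv3, hxv4,
      hdy, hdz, hdx, -, -, -, -⟩
  · simp only [List.pairwise_cons, List.mem_cons, List.not_mem_nil, List.mem_singleton,
      forall_eq_or_imp, forall_eq, false_implies, implies_true, and_true] at hpw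
    obtain ⟨⟨hxny, hxnz, hxnv1, hxnv2, hxnv3⟩, ⟨hyz, hyv1', hyv2', hyv3'⟩,
      ⟨hzv1', hzv2', hzv3'⟩, ⟨h12, h13⟩, h23, -⟩ := hpw
    have hcolz : ∀ v, G.Adj z v → π s(z, v) ≠ none := by
      intro v hv
      exact hcol s(z, v) (G.mem_edgeSet.mpr hv)
        (sym2_ne_of_ne (Or.inl hxz.ne') (Or.inl (Ne.symm hyz)))
        ⟨z, Sym2.mem_mk_left z v, x, Sym2.mem_mk_left x y,
          SimpleGraph.Walk.cons hxz.symm SimpleGraph.Walk.nil, by simp⟩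
    obtain ⟨σ, h1, h2⟩ := mainButterfly hπ hdegx hdy hdz hxy hxz hyv1 hyv3 hzv1 hzv2
      hxv1 hxv3 hxv1 hxv2 hyz hzv1' hzv3' hyv1' hyv2' h13 h12 hcolx hcoly hcolz huncol
    exact ⟨σ, h1, h2⟩
  · simp only [List.pairwise_cons, List.mem_cons, List.not_mem_nil, List.mem_singleton,
      forall_eq_or_imp, forall_eq, false_implies, implies_true, and_true] at hpw
    obtain ⟨⟨hxny, hxnz, hxnv1, hxnv2, hxnv3, hxnv4⟩, ⟨hyz, hyv1', hyv2', hyv3', hyv4'⟩,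
      ⟨hzv1', hzv2', hzv3', hzv4'⟩, ⟨h12, h13, h14⟩, ⟨h23, h24⟩, h34, -⟩ := hpw
    have hcolz : ∀ v, G.Adj z v → π s(z, v) ≠ none := by
      intro v hv
      exact hcol s(z, v) (G.mem_edgeSet.mpr hv)
        (sym2_ne_of_ne (Or.inl hxz.ne') (Or.inl (Ne.symm hyz)))
        ⟨z, Sym2.mem_mk_left z v, x, Sym2.mem_mk_left x y,
          SimpleGraph.Walk.cons hxz.symm SimpleGraph.Walk.nil, by simp⟩
    obtain ⟨σ, h1, h2⟩ := mainButterfly hπ hdegx hdy hdz hxy hxz hyv1 hyv4 hzv2 hzv3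
      hxv1 hxv4 hxv2 hxv3 hyz hzv1' hzv4' hyv2' hyv3' h14 h23 hcolx hcoly hcolz huncol
    exact ⟨σ, h1, h2⟩
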